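/- There exists a constant Δ_d ∈ [1, ∞), depending only on d, with the following property: whenever K ⊂ ℝ^d is a compact convex set satisfying [0, Δ_d]^d ⊆ K ⊆ [0, M]^d for some M ≥ Δ_d, then for every t > 0, {z ∈ [0, 1/2]^d : v_K(z) = t} = {z ∈ [0, 1/2]^d : ∏_{i=1}^d z_i = (d!/d^d)·t}. That is, near the origin the level sets of v_K are pseudo-hyperboloids. -/

import Mathlib

open MeasureTheory Set Finset

/-- The function `v_K(z)`: the infimum of `Vol(K ∩ H)` over all closed half-spaces `H`
containing `z`. A closed half-space is `{w : ∑ i, u i * w i ≤ c}` with `u ≠ 0`, and it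
contains `z` iff `∑ i, u i * z i ≤ c`. -/
noncomputable def floatVal (d : ℕ) (K : Set (Fin d → ℝ)) (z : Fin d → ℝ) : ENNReal :=
  ⨅ (u : Fin d → ℝ) (_ : u ≠ 0) (c : ℝ) (_ : ∑ i, u i * z i ≤ c),
    MeasureTheory.volume (K ∩ {w : Fin d → ℝ | ∑ i, u i * w i ≤ c})

namespace FloatAux

/-- The corner simplex `{w ≥ 0, ∑ w ≤ c}`. -/
def cornerSimplex (n : ℕ) (c : ℝ) : Set (Fin n → ℝ) :=
  {w | (∀ i, 0 ≤ w i) ∧ ∑ i, w i ≤ c}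

lemma cornerSimplex_empty (n : ℕ) {c : ℝ} (hc : c < 0) : cornerSimplex n c = ∅ := by
  ext w
  simp only [cornerSimplex, Set.mem_setOf_eq, Set.mem_empty_iff_false, iff_false]
  rintro ⟨h0, hs⟩
  exact absurd (le_trans (Finset.sum_nonneg fun i _ => h0 i) hs) (not_le.2 hc)

lemma measurableSet_cornerSimplex (n : ℕ) (c : ℝ) : MeasurableSet (cornerSimplex n c) := by
  have : cornerSimplex n c = (⋂ i, {w : Fin n → ℝ | 0 ≤ w i}) ∩ {w | ∑ i, w i ≤ c} := by
    ext w; simp [cornerSimplex, forall_and]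
  rw [this]
  exact (MeasurableSet.iInter fun i =>
      measurableSet_le measurable_const (measurable_pi_apply i)).inter
    (measurableSet_le (Finset.measurable_sum _ fun i _ => measurable_pi_apply i)
      measurable_const)

lemma volume_cornerSimplex : ∀ (n : ℕ) {c : ℝ}, 0 ≤ c →
    volume (cornerSimplex n c) = ENNReal.ofReal (c ^ n / n.factorial) := by
  intro n
  induction n with
  | zero =>
    intro c hc
    have : cornerSimplex 0 c = Set.univ := by
      ext w; simp [cornerSimplex, hc]
    rw [this]
    simp [MeasureTheory.volume_pi, MeasureTheory.Measure.pi_univ]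
  | succ n ih =>
    intro c hc
    have Tmeas : MeasurableSet (cornerSimplex (n+1) c) := measurableSet_cornerSimplex _ _
    set T := cornerSimplex (n+1) c with hT
    set e := MeasurableEquiv.piFinSuccAbove (fun _ : Fin (n+1) => ℝ) 0 with he
    have hpres : MeasurePreserving e.symm :=
      (volume_preserving_piFinSuccAbove (fun _ => ℝ) 0).symm
    have h1 : volume T = volume (e.symm ⁻¹' T) :=
      (hpres.measure_preimage Tmeas.nullMeasurableSet).symm
    rw [h1]
    have hsymm : ∀ (x : ℝ) (y : Fin n → ℝ), e.symm (x, y) = Fin.cons x y := by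
      intro x y
      ext j
      simp [he, MeasurableEquiv.piFinSuccAbove, Fin.insertNthEquiv, Fin.insertNth_zero']
    have hpre : e.symm ⁻¹' T
        = {p : ℝ × (Fin n → ℝ) | (0 ≤ p.1 ∧ ∀ i, 0 ≤ p.2 i) ∧ p.1 + ∑ i, p.2 i ≤ c} := by
      ext ⟨x, y⟩
      simp only [Set.mem_preimage, hsymm, hT, cornerSimplex, Set.mem_setOf_eq, Fin.sum_cons,
        Fin.forall_fin_succ, Fin.cons_zero, Fin.cons_succ]
    rw [hpre]
    have hprod : (volume : Measure (ℝ × (Fin n → ℝ))) = (volume : Measure ℝ).prod volume :=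
      MeasureTheory.Measure.volume_eq_prod _ _
    have hmeas2 : MeasurableSet
        {p : ℝ × (Fin n → ℝ) | (0 ≤ p.1 ∧ ∀ i, 0 ≤ p.2 i) ∧ p.1 + ∑ i, p.2 i ≤ c} := by
      rw [← hpre]; exact e.symm.measurable Tmeas
    rw [hprod, Measure.prod_apply hmeas2]
    have hslice : ∀ x : ℝ,
        volume (Prod.mk x ⁻¹'
          {p : ℝ × (Fin n → ℝ) | (0 ≤ p.1 ∧ ∀ i, 0 ≤ p.2 i) ∧ p.1 + ∑ i, p.2 i ≤ c})
          = Set.indicator (Set.Icc 0 c) (fun x => ENNReal.ofReal ((c - x) ^ n / n.factorial)) x := by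
      intro x
      by_cases hx : x ∈ Set.Icc (0:ℝ) c
      · rw [Set.indicator_of_mem hx]
        have : Prod.mk x ⁻¹'
            {p : ℝ × (Fin n → ℝ) | (0 ≤ p.1 ∧ ∀ i, 0 ≤ p.2 i) ∧ p.1 + ∑ i, p.2 i ≤ c}
            = cornerSimplex n (c - x) := by
          ext y
          simp only [Set.mem_preimage, Set.mem_setOf_eq, cornerSimplex]
          constructor
          · rintro ⟨⟨-, h2⟩, h3⟩; exact ⟨h2, by linarith⟩
          · rintro ⟨h2, h3⟩; exact ⟨⟨hx.1, h2⟩, by linarith⟩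
        rw [this, ih (by linarith [hx.2])]
      · rw [Set.indicator_of_notMem hx]
        rw [Set.mem_Icc, not_and_or, not_le, not_le] at hx
        rcases hx with h | h
        · have : Prod.mk x ⁻¹'
              {p : ℝ × (Fin n → ℝ) | (0 ≤ p.1 ∧ ∀ i, 0 ≤ p.2 i) ∧ p.1 + ∑ i, p.2 i ≤ c} = ∅ := by
            ext y; simp only [Set.mem_preimage, Set.mem_setOf_eq, Set.mem_empty_iff_false,
              iff_false]
            rintro ⟨⟨h1, -⟩, -⟩; exact absurd h1 (not_le.2 h)
          rw [this]; exact measure_empty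
        · have hsub : Prod.mk x ⁻¹'
              {p : ℝ × (Fin n → ℝ) | (0 ≤ p.1 ∧ ∀ i, 0 ≤ p.2 i) ∧ p.1 + ∑ i, p.2 i ≤ c}
              ⊆ cornerSimplex n (c - x) := by
            rintro y ⟨⟨-, h2⟩, h3⟩; exact ⟨h2, by linarith⟩
          have h0 : volume (cornerSimplex n (c - x)) = 0 := by
            rw [cornerSimplex_empty n (by linarith)]; exact measure_empty
          exact measure_mono_null hsub h0
    simp only [hslice]
    rw [lintegral_indicator measurableSet_Icc]
    have hint : IntegrableOn (fun x => (c - x) ^ n / n.factorial) (Set.Icc 0 c) volume :=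
      (Continuous.integrableOn_Icc (by fun_prop))
    have hnn : 0 ≤ᵐ[volume.restrict (Set.Icc 0 c)] fun x => (c - x) ^ n / n.factorial := by
      filter_upwards [ae_restrict_mem measurableSet_Icc] with x hx
      have : (0:ℝ) ≤ c - x := by linarith [hx.2]
      positivity
    rw [← MeasureTheory.ofReal_integral_eq_lintegral_ofReal hint hnn]
    congr 1
    rw [MeasureTheory.integral_Icc_eq_integral_Ioc, ← intervalIntegral.integral_of_le hc]
    have : ∫ x in (0:ℝ)..c, (c - x) ^ n / n.factorial
        = (∫ x in (0:ℝ)..c, (c - x) ^ n) / n.factorial := intervalIntegral.integral_div _ _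
    rw [this, intervalIntegral.integral_comp_sub_left (fun x => x ^ n) c, sub_zero, sub_self,
      integral_pow]
    rw [Nat.factorial_succ]
    push_cast
    field_simp
    simp

lemma volume_scaledSimplex (d : ℕ) (a : Fin d → ℝ) (ha : ∀ i, 0 < a i) :
    volume {w : Fin d → ℝ | (∀ i, 0 ≤ w i) ∧ ∑ i, w i / a i ≤ 1}
      = ENNReal.ofReal ((∏ i, a i) / d.factorial) := by
  set f : (Fin d → ℝ) →ₗ[ℝ] (Fin d → ℝ) := Matrix.toLin' (Matrix.diagonal fun i => (a i)⁻¹)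
    with hf
  have hfapp : ∀ (w : Fin d → ℝ) (i : Fin d), f w i = w i / a i := by
    intro w i
    simp [hf, Matrix.toLin'_apply, Matrix.mulVec_diagonal, div_eq_inv_mul]
  have hdet : LinearMap.det f = ∏ i, (a i)⁻¹ := by
    rw [hf, LinearMap.det_toLin', Matrix.det_diagonal]
  have hdetne : LinearMap.det f ≠ 0 := by
    rw [hdet]
    exact Finset.prod_ne_zero_iff.2 fun i _ => inv_ne_zero (ha i).ne'
  have hset : {w : Fin d → ℝ | (∀ i, 0 ≤ w i) ∧ ∑ i, w i / a i ≤ 1}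
      = f ⁻¹' cornerSimplex d 1 := by
    ext w
    simp only [Set.mem_preimage, Set.mem_setOf_eq, cornerSimplex, hfapp]
    constructor
    · rintro ⟨h1, h2⟩
      exact ⟨fun i => div_nonneg (h1 i) (ha i).le, h2⟩
    · rintro ⟨h1, h2⟩
      refine ⟨fun i => ?_, h2⟩
      have := h1 i
      exact (div_nonneg_iff.1 this).resolve_right (fun h => absurd h.2 (not_le.2 (ha i))) |>.1
  rw [hset, MeasureTheory.Measure.addHaar_preimage_linearMap volume hdetne,
    volume_cornerSimplex d zero_le_one, hdet]
  rw [← ENNReal.ofReal_mul (by positivity)]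
  congr 1
  rw [← Finset.prod_inv_distrib]
  simp only [inv_inv, one_pow]
  rw [abs_of_nonneg (Finset.prod_nonneg fun i _ => (ha i).le)]
  field_simp

lemma amgm (d : ℕ) (hd : 1 ≤ d) (z a : Fin d → ℝ) (hz : ∀ i, 0 < z i) (ha : ∀ i, 0 < a i)
    (h1 : ∑ i, z i / a i = 1) : (d : ℝ) ^ d * ∏ i, z i ≤ ∏ i, a i := by
  have hd0 : (0:ℝ) < d := by exact_mod_cast hd
  set x : Fin d → ℝ := fun i => d * z i / a i with hx
  have hxnn : ∀ i ∈ Finset.univ, (0:ℝ) ≤ x i := fun i _ =>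
    div_nonneg (mul_nonneg hd0.le (hz i).le) (ha i).le
  have hsum : ∑ i : Fin d, (d:ℝ)⁻¹ = 1 := by
    rw [Finset.sum_const, Finset.card_univ, Fintype.card_fin, nsmul_eq_mul]
    field_simp
  have hgm := Real.geom_mean_le_arith_mean_weighted Finset.univ (fun _ => (d:ℝ)⁻¹) x
    (fun i _ => by positivity : ∀ i ∈ Finset.univ, (0:ℝ) ≤ (d:ℝ)⁻¹) hsum hxnn
  have harith : ∑ i, (d:ℝ)⁻¹ * x i = 1 := by
    rw [← h1]
    refine Finset.sum_congr rfl fun i _ => ?_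
    rw [hx]
    field_simp
  rw [harith] at hgm
  have hprodx : ∏ i, x i ≤ 1 := by
    have h2 : ∏ i, x i = (∏ i, x i ^ ((d:ℝ)⁻¹)) ^ (d:ℕ) := by
      rw [← Finset.prod_pow]
      refine Finset.prod_congr rfl fun i _ => ?_
      rw [← Real.rpow_natCast (x i ^ ((d:ℝ)⁻¹)) d, ← Real.rpow_mul (hxnn i (Finset.mem_univ i))]
      rw [inv_mul_cancel₀ hd0.ne', Real.rpow_one]
    rw [h2]
    calc (∏ i, x i ^ ((d:ℝ)⁻¹)) ^ (d:ℕ) ≤ 1 ^ (d:ℕ) := by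
          apply pow_le_pow_left₀
            (Finset.prod_nonneg fun i _ => Real.rpow_nonneg (hxnn i (Finset.mem_univ i)) _) hgm
      _ = 1 := one_pow _
  have hexp : ∏ i, x i = ((d:ℝ) ^ d * ∏ i, z i) / ∏ i, a i := by
    rw [hx]
    rw [Finset.prod_div_distrib, Finset.prod_mul_distrib, Finset.prod_const, Finset.card_univ,
      Fintype.card_fin]
  rw [hexp] at hprodx
  have hpa : (0:ℝ) < ∏ i, a i := Finset.prod_pos fun i _ => ha i
  exact (div_le_one hpa).1 hprodx

end FloatAux
namespace FloatAux

lemma floatVal_le (d : ℕ) (K : Set (Fin d → ℝ)) (z u : Fin d → ℝ) (hu : u ≠ 0) (c : ℝ)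
    (hc : ∑ i, u i * z i ≤ c) :
    floatVal d K z ≤ volume (K ∩ {w : Fin d → ℝ | ∑ i, u i * w i ≤ c}) := by
  refine iInf_le_of_le u ?_
  refine iInf_le_of_le hu ?_
  refine iInf_le_of_le c ?_
  exact iInf_le_of_le hc le_rfl

lemma floatVal_zero (d : ℕ) (hd : 1 ≤ d) (K : Set (Fin d → ℝ)) (M : ℝ)
    (hKM : K ⊆ Set.Icc (0 : Fin d → ℝ) (fun _ => M)) (z : Fin d → ℝ) (i : Fin d)
    (hzi : z i = 0) : floatVal d K z = 0 := by
  refine le_antisymm ?_ zero_le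
  have hu : (Pi.single i 1 : Fin d → ℝ) ≠ 0 := by
    intro h
    have := congrFun h i
    simp at this
  have hsum : ∀ w : Fin d → ℝ, ∑ j, (Pi.single i 1 : Fin d → ℝ) j * w j = w i := by
    intro w
    rw [Finset.sum_eq_single_of_mem i (Finset.mem_univ i)]
    · simp
    · intro j _ hj
      rw [Pi.single_eq_of_ne hj, zero_mul]
  have hc : ∑ j, (Pi.single i 1 : Fin d → ℝ) j * z j ≤ 0 := by rw [hsum, hzi]
  refine le_trans (floatVal_le d K z _ hu 0 hc) ?_
  have hsub : K ∩ {w : Fin d → ℝ | ∑ j, (Pi.single i 1 : Fin d → ℝ) j * w j ≤ 0}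
      ⊆ Set.pi Set.univ (Function.update (fun _ : Fin d => (Set.univ : Set ℝ)) i {0}) := by
    rintro w ⟨hwK, hw⟩
    rw [Set.mem_setOf_eq, hsum] at hw
    have h0 : 0 ≤ w i := (hKM hwK).1 i
    intro j _
    rcases eq_or_ne j i with rfl | hj
    · simp only [Function.update_self, Set.mem_singleton_iff]
      linarith
    · simp [Function.update_of_ne hj]
  refine le_trans (measure_mono hsub) ?_
  rw [MeasureTheory.volume_pi_pi]
  rw [Finset.prod_eq_zero (Finset.mem_univ i)]
  simp

lemma floatVal_eq (d : ℕ) (hd : 2 ≤ d) (Δ : ℝ) (hΔd : (d:ℝ) ≤ Δ)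
    (hΔbig : (2*(d:ℝ)-2)^(d-1) * (d:ℝ)^d / d.factorial + 1 ≤ Δ)
    (K : Set (Fin d → ℝ)) (M : ℝ)
    (hKsub : Set.Icc (0 : Fin d → ℝ) (fun _ => Δ) ⊆ K)
    (hKM : K ⊆ Set.Icc (0 : Fin d → ℝ) (fun _ => M))
    (z : Fin d → ℝ) (hz2 : ∀ i, z i ≤ 1/2) (hzpos : ∀ i, 0 < z i) :
    floatVal d K z = ENNReal.ofReal (((d:ℝ)^d * ∏ i, z i) / d.factorial) := by
  haveI : NeZero d := ⟨by omega⟩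
  have hd0 : (0:ℝ) < d := by exact_mod_cast (by omega : 0 < d)
  have hd2 : (2:ℝ) ≤ d := by exact_mod_cast hd
  have hΔ2 : (2:ℝ) ≤ Δ := le_trans hd2 hΔd
  have hfac : (0:ℝ) < d.factorial := by exact_mod_cast d.factorial_pos
  have hpz : (0:ℝ) < ∏ i, z i := Finset.prod_pos fun i _ => hzpos i
  set F : ℝ := ((d:ℝ)^d * ∏ i, z i) / d.factorial with hF
  have hFpos : 0 < F := by positivity
  refine le_antisymm ?_ ?_
  · -- upper bound: the optimal simplex half-space
    set u : Fin d → ℝ := fun i => ((d:ℝ) * z i)⁻¹ with hu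
    have hupos : ∀ i, 0 < u i := fun i => inv_pos.2 (mul_pos hd0 (hzpos i))
    have hune : u ≠ 0 := by
      intro h
      have := congrFun h ⟨0, by omega⟩
      exact absurd this (hupos _).ne'
    have hc : ∑ i, u i * z i ≤ 1 := by
      have : ∀ i ∈ Finset.univ, u i * z i = (d:ℝ)⁻¹ := by
        intro i _
        show ((d:ℝ) * z i)⁻¹ * z i = (d:ℝ)⁻¹
        rw [mul_inv, mul_assoc, inv_mul_cancel₀ (hzpos i).ne', mul_one]
      rw [Finset.sum_congr rfl this, Finset.sum_const, Finset.card_univ, Fintype.card_fin,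
        nsmul_eq_mul]
      rw [mul_inv_cancel₀ hd0.ne']
    refine le_trans (floatVal_le d K z u hune 1 hc) ?_
    have hseteq : K ∩ {w : Fin d → ℝ | ∑ i, u i * w i ≤ 1}
        = {w : Fin d → ℝ | (∀ i, 0 ≤ w i) ∧ ∑ i, w i / ((d:ℝ) * z i) ≤ 1} := by
      have hterm : ∀ (w : Fin d → ℝ) (i : Fin d), u i * w i = w i / ((d:ℝ) * z i) := by
        intro w i
        rw [hu, div_eq_inv_mul]
      ext w
      simp only [Set.mem_inter_iff, Set.mem_setOf_eq]
      constructor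
      · rintro ⟨hwK, hw⟩
        refine ⟨fun i => (hKM hwK).1 i, ?_⟩
        rw [← Finset.sum_congr rfl fun i _ => hterm w i]
        exact hw
      · rintro ⟨h0, hs⟩
        have hwK : w ∈ K := by
          apply hKsub
          refine ⟨fun i => h0 i, fun i => ?_⟩
          have hone : w i / ((d:ℝ) * z i) ≤ 1 := by
            refine le_trans ?_ hs
            refine Finset.single_le_sum (f := fun j => w j / ((d:ℝ) * z j)) ?_ (Finset.mem_univ i)
            intro j _
            exact div_nonneg (h0 j) (mul_pos hd0 (hzpos j)).le
          have : w i ≤ (d:ℝ) * z i := by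
            rwa [div_le_one (mul_pos hd0 (hzpos i))] at hone
          calc w i ≤ (d:ℝ) * z i := this
            _ ≤ (d:ℝ) * (1/2) := by
                exact mul_le_mul_of_nonneg_left (hz2 i) hd0.le
            _ ≤ Δ := by linarith
        refine ⟨hwK, ?_⟩
        rw [Finset.sum_congr rfl fun i _ => hterm w i]
        exact hs
    rw [hseteq, volume_scaledSimplex d _ (fun i => mul_pos hd0 (hzpos i))]
    rw [hF]
    apply le_of_eq
    congr 1
    rw [Finset.prod_mul_distrib, Finset.prod_const, Finset.card_univ, Fintype.card_fin]
  · -- lower bound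
    refine le_iInf fun u => le_iInf fun hune => le_iInf fun c => le_iInf fun hc => ?_
    set s : ℝ := ∑ i, u i * z i with hs
    have hsub1 : Set.Icc (0 : Fin d → ℝ) (fun _ => Δ) ∩ {w | ∑ i, u i * w i ≤ s}
        ⊆ K ∩ {w | ∑ i, u i * w i ≤ c} := by
      rintro w ⟨h1, h2⟩
      exact ⟨hKsub h1, le_trans h2 hc⟩
    refine le_trans ?_ (measure_mono hsub1)
    by_cases hall : ∀ i, 0 < u i
    · -- all coefficients positive
      have hspos : 0 < s :=
        Finset.sum_pos (fun i _ => mul_pos (hall i) (hzpos i)) Finset.univ_nonempty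
      set a : Fin d → ℝ := fun i => s / u i with ha
      have hapos : ∀ i, 0 < a i := fun i => div_pos hspos (hall i)
      have hua : ∀ i, u i = s / a i := by
        intro i
        show u i = s / (s / u i)
        field_simp
      have hsum1 : ∑ i, z i / a i = 1 := by
        have h1 : ∀ i ∈ Finset.univ, z i / a i = u i * z i / s := by
          intro i _
          show z i / (s / u i) = u i * z i / s
          rw [div_div_eq_mul_div]
          ring
        rw [Finset.sum_congr rfl h1, ← Finset.sum_div, ← hs, div_self hspos.ne']
      have hzlea : ∀ i, z i ≤ a i := by
        intro i
        have h1 : z i / a i ≤ 1 := by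
          refine le_trans ?_ hsum1.le
          exact Finset.single_le_sum (f := fun j => z j / a j)
            (fun j _ => div_nonneg (hzpos j).le (hapos j).le) (Finset.mem_univ i)
        rwa [div_le_one (hapos i)] at h1
      by_cases hbig : ∀ i, a i ≤ Δ
      · -- the simplex fits inside the cube
        have hsub2 : {w : Fin d → ℝ | (∀ i, 0 ≤ w i) ∧ ∑ i, w i / a i ≤ 1}
            ⊆ Set.Icc (0 : Fin d → ℝ) (fun _ => Δ) ∩ {w | ∑ i, u i * w i ≤ s} := by
          rintro w ⟨h0, hsw⟩
          have hwa : ∀ i, w i ≤ a i := by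
            intro i
            have h1 : w i / a i ≤ 1 :=
              le_trans (Finset.single_le_sum (f := fun j => w j / a j)
                (fun j _ => div_nonneg (h0 j) (hapos j).le) (Finset.mem_univ i)) hsw
            rwa [div_le_one (hapos i)] at h1
          refine ⟨⟨fun i => h0 i, fun i => le_trans (hwa i) (hbig i)⟩, ?_⟩
          have h2 : ∀ i ∈ Finset.univ, u i * w i = s * (w i / a i) := by
            intro i _
            rw [hua i]
            ring
          rw [Set.mem_setOf_eq, Finset.sum_congr rfl h2, ← Finset.mul_sum]
          calc s * ∑ i, w i / a i ≤ s * 1 := mul_le_mul_of_nonneg_left hsw hspos.le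
            _ = s := mul_one s
        refine le_trans ?_ (measure_mono hsub2)
        rw [volume_scaledSimplex d a hapos]
        apply ENNReal.ofReal_le_ofReal
        rw [hF]
        gcongr
        exact amgm d (by omega) z a hzpos hapos hsum1
      · -- some intercept exceeds Δ : use a box
        push_neg at hbig
        obtain ⟨k, hk⟩ := hbig
        have h2d2 : (0:ℝ) < 2*(d:ℝ)-2 := by linarith
        have h2d2' : (1:ℝ) ≤ 2*(d:ℝ)-2 := by linarith
        have hΔpos : (0:ℝ) < Δ := by linarith
        set hi : Fin d → ℝ := fun i => if i = k then Δ/2 else min Δ (a i) / (2*(d:ℝ)-2)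
          with hhi
        have hhi0 : ∀ i, 0 ≤ hi i := by
          intro i
          show (0:ℝ) ≤ if i = k then Δ/2 else min Δ (a i) / (2*(d:ℝ)-2)
          split
          · linarith
          · exact div_nonneg (le_min hΔpos.le (hapos i).le) h2d2.le
        have hminz : ∀ i, z i ≤ min Δ (a i) := fun i => le_min (by linarith [hz2 i]) (hzlea i)
        have hsub2 : Set.Icc (0 : Fin d → ℝ) hi
            ⊆ Set.Icc (0 : Fin d → ℝ) (fun _ => Δ) ∩ {w | ∑ i, u i * w i ≤ s} := by
          rintro w ⟨hw0, hwhi⟩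
          constructor
          · refine ⟨hw0, fun i => le_trans (hwhi i) ?_⟩
            show (if i = k then Δ/2 else min Δ (a i) / (2*(d:ℝ)-2)) ≤ Δ
            split
            · linarith
            · exact le_trans (div_le_self (le_min hΔpos.le (hapos i).le) h2d2') (min_le_left _ _)
          · rw [Set.mem_setOf_eq]
            have hterm : ∀ i ∈ Finset.univ,
                u i * w i ≤ if i = k then s/2 else s/(2*(d:ℝ)-2) := by
              intro i _
              have h1 : u i * w i ≤ u i * hi i := mul_le_mul_of_nonneg_left (hwhi i) (hall i).le
              refine le_trans h1 ?_
              show u i * (if i = k then Δ/2 else min Δ (a i) / (2*(d:ℝ)-2)) ≤ _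
              by_cases hik : i = k
              · rw [if_pos hik, if_pos hik, hua i, hik]
                rw [div_mul_eq_mul_div, div_le_div_iff₀ (hapos k) (by norm_num)]
                have : Δ ≤ a k := hk.le
                nlinarith [hspos]
              · rw [if_neg hik, if_neg hik, hua i]
                rw [div_mul_eq_mul_div, div_le_div_iff₀ (hapos i) h2d2]
                have h2 : min Δ (a i) ≤ a i := min_le_right _ _
                have h3 : 0 ≤ min Δ (a i) := le_min hΔpos.le (hapos i).le
                calc s * (min Δ (a i) / (2*(d:ℝ)-2)) * (2*(d:ℝ)-2) = s * min Δ (a i) := by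
                      rw [mul_assoc, div_mul_cancel₀ _ h2d2.ne']
                  _ ≤ s * a i := mul_le_mul_of_nonneg_left h2 hspos.le
            refine le_trans (Finset.sum_le_sum hterm) ?_
            rw [← Finset.add_sum_erase _ _ (Finset.mem_univ k), if_pos rfl]
            have h4 : ∑ i ∈ Finset.univ.erase k, (if i = k then s/2 else s/(2*(d:ℝ)-2))
                = ((d:ℝ) - 1) * (s/(2*(d:ℝ)-2)) := by
              rw [Finset.sum_congr rfl fun i hik => if_neg (Finset.ne_of_mem_erase hik)]
              rw [Finset.sum_const, Finset.card_erase_of_mem (Finset.mem_univ k),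
                Finset.card_univ, Fintype.card_fin, nsmul_eq_mul]
              congr 1
              push_cast [Nat.cast_sub (by omega : 1 ≤ d)]
              ring
            rw [h4]
            have h5 : ((d:ℝ) - 1) * (s/(2*(d:ℝ)-2)) = s/2 := by
              rw [mul_div_assoc', div_eq_div_iff h2d2.ne' two_ne_zero]
              ring
            rw [h5]
            linarith
        refine le_trans ?_ (measure_mono hsub2)
        rw [Real.volume_Icc_pi]
        have h5 : ∀ i ∈ Finset.univ, ENNReal.ofReal (hi i - (0: Fin d → ℝ) i)
            = ENNReal.ofReal (hi i) := by
          intro i _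
          norm_num
        rw [Finset.prod_congr rfl h5, ← ENNReal.ofReal_prod_of_nonneg (fun i _ => hhi0 i)]
        apply ENNReal.ofReal_le_ofReal
        -- now the real inequality F ≤ ∏ hi
        have hprodsplit : ∏ i, hi i = (Δ/2) * ∏ i ∈ Finset.univ.erase k, hi i := by
          rw [← Finset.mul_prod_erase Finset.univ hi (Finset.mem_univ k)]
          congr 1
          show (if k = k then Δ/2 else _) = Δ/2
          rw [if_pos rfl]
        have herase : ∏ i ∈ Finset.univ.erase k, (z i / (2*(d:ℝ)-2))
            ≤ ∏ i ∈ Finset.univ.erase k, hi i := by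
          refine Finset.prod_le_prod (fun i _ => div_nonneg (hzpos i).le h2d2.le) ?_
          intro i hik
          show z i / (2*(d:ℝ)-2) ≤ if i = k then Δ/2 else min Δ (a i) / (2*(d:ℝ)-2)
          rw [if_neg (Finset.ne_of_mem_erase hik)]
          exact by gcongr; exact hminz i
        have herase2 : ∏ i ∈ Finset.univ.erase k, (z i / (2*(d:ℝ)-2))
            = (∏ i ∈ Finset.univ.erase k, z i) / (2*(d:ℝ)-2)^(d-1) := by
          rw [Finset.prod_div_distrib, Finset.prod_const, Finset.card_erase_of_mem
            (Finset.mem_univ k), Finset.card_univ, Fintype.card_fin]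
        have hzP : 2 * ∏ i, z i ≤ ∏ i ∈ Finset.univ.erase k, z i := by
          have hsplit : ∏ i, z i = z k * ∏ i ∈ Finset.univ.erase k, z i :=
            (Finset.mul_prod_erase Finset.univ z (Finset.mem_univ k)).symm
          have hPnn : 0 ≤ ∏ i ∈ Finset.univ.erase k, z i :=
            Finset.prod_nonneg fun i _ => (hzpos i).le
          have : z k * ∏ i ∈ Finset.univ.erase k, z i
              ≤ (1/2) * ∏ i ∈ Finset.univ.erase k, z i :=
            mul_le_mul_of_nonneg_right (hz2 k) hPnn
          rw [hsplit]
          linarith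
        have hCpos : (0:ℝ) < (2*(d:ℝ)-2)^(d-1) := pow_pos h2d2 _
        have hnum : (d:ℝ)^d * (2*(d:ℝ)-2)^(d-1) ≤ Δ * d.factorial := by
          have h6 : (2*(d:ℝ)-2)^(d-1) * (d:ℝ)^d / d.factorial ≤ Δ := by linarith
          rw [div_le_iff₀ hfac] at h6
          calc (d:ℝ)^d * (2*(d:ℝ)-2)^(d-1) = (2*(d:ℝ)-2)^(d-1) * (d:ℝ)^d := by ring
            _ ≤ Δ * d.factorial := h6
        calc F = ((d:ℝ)^d * ∏ i, z i) / d.factorial := hF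
          _ ≤ (Δ/2) * ((2 * ∏ i, z i) / (2*(d:ℝ)-2)^(d-1)) := by
              rw [div_le_iff₀ hfac]
              have e1 : (Δ/2) * ((2 * ∏ i, z i) / (2*(d:ℝ)-2)^(d-1)) * d.factorial
                  = (Δ * d.factorial) * (∏ i, z i) / (2*(d:ℝ)-2)^(d-1) := by
                field_simp
              rw [e1, le_div_iff₀ hCpos]
              calc ((d:ℝ)^d * ∏ i, z i) * (2*(d:ℝ)-2)^(d-1)
                  = ((d:ℝ)^d * (2*(d:ℝ)-2)^(d-1)) * ∏ i, z i := by ring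
                _ ≤ (Δ * d.factorial) * ∏ i, z i :=
                    mul_le_mul_of_nonneg_right hnum hpz.le
          _ ≤ (Δ/2) * ((∏ i ∈ Finset.univ.erase k, z i) / (2*(d:ℝ)-2)^(d-1)) := by
              have : (∏ i, z i) * 2 / (2*(d:ℝ)-2)^(d-1) ≤ (∏ i ∈ Finset.univ.erase k, z i) / (2*(d:ℝ)-2)^(d-1) := by
                gcongr
                linarith
              apply mul_le_mul_of_nonneg_left _ (by linarith : (0:ℝ) ≤ Δ/2)
              calc (2 * ∏ i, z i) / (2*(d:ℝ)-2)^(d-1) = (∏ i, z i) * 2 / (2*(d:ℝ)-2)^(d-1) := by ring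
                _ ≤ _ := this
          _ ≤ (Δ/2) * ∏ i ∈ Finset.univ.erase k, hi i := by
              apply mul_le_mul_of_nonneg_left _ (by linarith : (0:ℝ) ≤ Δ/2)
              rw [← herase2]
              exact herase
          _ = ∏ i, hi i := hprodsplit.symm
    · -- some coefficient is nonpositive
      push_neg at hall
      obtain ⟨k, hk⟩ := hall
      have hk0 : ¬ (0 < u k) := not_lt.2 hk
      set lo : Fin d → ℝ := fun i => if 0 < u i then 0 else 1/2 with hlo
      set hi : Fin d → ℝ := fun i => if 0 < u i then z i else Δ with hhi
      have hsub2 : Set.Icc lo hi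
          ⊆ Set.Icc (0 : Fin d → ℝ) (fun _ => Δ) ∩ {w | ∑ i, u i * w i ≤ s} := by
        rintro w ⟨hw0, hwhi⟩
        refine ⟨⟨fun i => le_trans ?_ (hw0 i), fun i => le_trans (hwhi i) ?_⟩, ?_⟩
        · show (0:ℝ) ≤ if 0 < u i then 0 else 1/2
          split <;> norm_num
        · show (if 0 < u i then z i else Δ) ≤ Δ
          split
          · linarith [hz2 i]
          · exact le_refl Δ
        · rw [Set.mem_setOf_eq, hs]
          refine Finset.sum_le_sum fun i _ => ?_
          by_cases hui : 0 < u i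
          · have : w i ≤ z i := by
              have h9 := hwhi i
              simp only [hhi, if_pos hui] at h9
              exact h9
            exact mul_le_mul_of_nonneg_left this hui.le
          · have h1 : z i ≤ w i := by
              have h9 := hw0 i
              simp only [hlo, if_neg hui] at h9
              linarith [hz2 i]
            have h2 : u i ≤ 0 := not_lt.1 hui
            exact mul_le_mul_of_nonpos_left h1 h2
      refine le_trans ?_ (measure_mono hsub2)
      rw [Real.volume_Icc_pi]
      set g : Fin d → ℝ := fun i => if 0 < u i then z i else Δ - 1/2 with hg
      have hgeq : ∀ i ∈ Finset.univ, ENNReal.ofReal (hi i - lo i) = ENNReal.ofReal (g i) := by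
        intro i _
        congr 1
        show (if 0 < u i then z i else Δ) - (if 0 < u i then 0 else 1/2)
            = if 0 < u i then z i else Δ - 1/2
        split <;> ring
      have hg0 : ∀ i, 0 ≤ g i := by
        intro i
        show (0:ℝ) ≤ if 0 < u i then z i else Δ - 1/2
        split
        · exact (hzpos i).le
        · linarith
      rw [Finset.prod_congr rfl hgeq, ← ENNReal.ofReal_prod_of_nonneg (fun i _ => hg0 i)]
      apply ENNReal.ofReal_le_ofReal
      have hsplit : ∏ i, g i = g k * ∏ i ∈ Finset.univ.erase k, g i :=
        (Finset.mul_prod_erase Finset.univ g (Finset.mem_univ k)).symm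
      have hgk : g k = Δ - 1/2 := by
        show (if 0 < u k then z k else Δ - 1/2) = Δ - 1/2
        rw [if_neg hk0]
      have herase : ∏ i ∈ Finset.univ.erase k, z i ≤ ∏ i ∈ Finset.univ.erase k, g i := by
        refine Finset.prod_le_prod (fun i _ => (hzpos i).le) ?_
        intro i _
        show z i ≤ if 0 < u i then z i else Δ - 1/2
        split
        · exact le_refl (z i)
        · linarith [hz2 i]
      have hzP : 2 * ∏ i, z i ≤ ∏ i ∈ Finset.univ.erase k, z i := by
        have hsplit2 : ∏ i, z i = z k * ∏ i ∈ Finset.univ.erase k, z i :=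
          (Finset.mul_prod_erase Finset.univ z (Finset.mem_univ k)).symm
        have hPnn : 0 ≤ ∏ i ∈ Finset.univ.erase k, z i :=
          Finset.prod_nonneg fun i _ => (hzpos i).le
        have : z k * ∏ i ∈ Finset.univ.erase k, z i
            ≤ (1/2) * ∏ i ∈ Finset.univ.erase k, z i :=
          mul_le_mul_of_nonneg_right (hz2 k) hPnn
        rw [hsplit2]
        linarith
      have hdd : (0:ℝ) ≤ (d:ℝ)^d := by positivity
      have hone : (1:ℝ) ≤ (2*(d:ℝ)-2)^(d-1) := one_le_pow₀ (by linarith)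
      have hnum2 : (d:ℝ)^d / d.factorial ≤ 2*Δ - 1 := by
        have h6 : (2*(d:ℝ)-2)^(d-1) * (d:ℝ)^d / d.factorial ≤ Δ - 1 := by linarith
        have h7 : (d:ℝ)^d / d.factorial ≤ (2*(d:ℝ)-2)^(d-1) * (d:ℝ)^d / d.factorial := by
          rw [div_le_div_iff₀ hfac hfac]
          calc (d:ℝ)^d * d.factorial = 1 * ((d:ℝ)^d * (d.factorial:ℝ)) := by ring
            _ ≤ (2*(d:ℝ)-2)^(d-1) * ((d:ℝ)^d * (d.factorial:ℝ)) :=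
                mul_le_mul_of_nonneg_right hone (by positivity)
            _ = (2*(d:ℝ)-2)^(d-1) * (d:ℝ)^d * d.factorial := by ring
        linarith
      calc F = ((d:ℝ)^d / d.factorial) * ∏ i, z i := by rw [hF]; ring
        _ ≤ (2*Δ - 1) * ∏ i, z i := mul_le_mul_of_nonneg_right hnum2 hpz.le
        _ = (Δ - 1/2) * (2 * ∏ i, z i) := by ring
        _ ≤ (Δ - 1/2) * ∏ i ∈ Finset.univ.erase k, z i := by
            apply mul_le_mul_of_nonneg_left hzP (by linarith : (0:ℝ) ≤ Δ - 1/2)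
        _ ≤ (Δ - 1/2) * ∏ i ∈ Finset.univ.erase k, g i := by
            apply mul_le_mul_of_nonneg_left herase (by linarith : (0:ℝ) ≤ Δ - 1/2)
        _ = ∏ i, g i := by rw [hsplit, hgk]

end FloatAux

theorem statement5 (d : ℕ) (hd : 2 ≤ d) :
    ∃ Δ : ℝ, 1 ≤ Δ ∧
      ∀ K : Set (Fin d → ℝ), IsCompact K → Convex ℝ K →
        Set.Icc (0 : Fin d → ℝ) (fun _ => Δ) ⊆ K →
        (∃ M : ℝ, Δ ≤ M ∧ K ⊆ Set.Icc (0 : Fin d → ℝ) (fun _ => M)) →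
        ∀ t : ℝ, 0 < t →
          {z : Fin d → ℝ | z ∈ Set.Icc (0 : Fin d → ℝ) (fun _ => (1 : ℝ) / 2) ∧
              floatVal d K z = ENNReal.ofReal t} =
          {z : Fin d → ℝ | z ∈ Set.Icc (0 : Fin d → ℝ) (fun _ => (1 : ℝ) / 2) ∧
              ∏ i, z i = ((d.factorial : ℝ) / (d : ℝ) ^ d) * t} := by
  classical
  have hd0 : (0:ℝ) < d := by exact_mod_cast (by omega : 0 < d)
  have hd2 : (2:ℝ) ≤ d := by exact_mod_cast hd
  have hfac : (0:ℝ) < d.factorial := by exact_mod_cast d.factorial_pos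
  set Δ : ℝ := max (d:ℝ) ((2*(d:ℝ)-2)^(d-1) * (d:ℝ)^d / d.factorial + 1) with hΔdef
  have hΔd : (d:ℝ) ≤ Δ := le_max_left _ _
  have hΔbig : (2*(d:ℝ)-2)^(d-1) * (d:ℝ)^d / d.factorial + 1 ≤ Δ := le_max_right _ _
  refine ⟨Δ, by linarith, ?_⟩
  intro K _ _ hKsub hKM t ht
  obtain ⟨M, hMΔ, hKM⟩ := hKM
  ext z
  simp only [Set.mem_setOf_eq]
  refine and_congr_right fun hz => ?_
  rw [Set.mem_Icc] at hz
  have hz0 : ∀ i, 0 ≤ z i := fun i => hz.1 i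
  have hz2 : ∀ i, z i ≤ 1/2 := fun i => hz.2 i
  by_cases hzpos : ∀ i, 0 < z i
  · have hpz : (0:ℝ) < ∏ i, z i := Finset.prod_pos fun i _ => hzpos i
    have heq := FloatAux.floatVal_eq d hd Δ hΔd hΔbig K M hKsub hKM z hz2 hzpos
    rw [heq]
    rw [ENNReal.ofReal_eq_ofReal_iff (by positivity) ht.le]
    have hdd : (0:ℝ) < (d:ℝ)^d := by positivity
    rw [div_eq_iff hfac.ne', div_mul_eq_mul_div, eq_div_iff hdd.ne']
    constructor <;> intro h <;> nlinarith [h]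
  · push_neg at hzpos
    obtain ⟨i, hile⟩ := hzpos
    have hzi : z i = 0 := le_antisymm hile (hz0 i)
    have h1 : floatVal d K z = 0 := FloatAux.floatVal_zero d (by omega) K M hKM z i hzi
    rw [h1]
    constructor
    · intro h
      exact absurd h.symm (ne_of_gt (ENNReal.ofReal_pos.2 ht))
    · intro h
      exfalso
      have hpos : (0:ℝ) < (d.factorial:ℝ)/(d:ℝ)^d * t := by positivity
      rw [← h] at hpos
      rw [Finset.prod_eq_zero (Finset.mem_univ i) hzi] at hpos
      exact lt_irrefl 0 hpos
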